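/- Let D be a digraph and let {a_1,b_1}, …, {a_k,b_k} (k ≥ 2) be pairwise vertex-disjoint missing edges of D such that {a_i,b_i} loses to {a_{i+1},b_{i+1}} for all i (indices modulo k), i.e., they form a directed cycle C in Δ(D). Suppose that every missing edge of D having an endpoint in K(C) = {a_i, b_i : 1 ≤ i ≤ k} is one of the pairs {a_i,b_i} (this is the condition K(C) = J(x) for a vertex x of C). Then K(C) is an interval of D: for all u, v ∈ K(C), N⁺(u) ∖ K(C) = N⁺(v) ∖ K(C) and N⁻(u) ∖ K(C) = N⁻(v) ∖ K(C). -/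

import Mathlib

namespace SSNC

variable {V : Type*}

/-- The arc relation of an oriented graph: no digons (hence irreflexive). -/
def Oriented (A : V → V → Prop) : Prop := ∀ u v, A u v → ¬ A v u

/-- `u ∈ N⁺⁺(v)`: the second out-neighborhood. -/
def SecondOut (A : V → V → Prop) (v u : V) : Prop :=
  u ≠ v ∧ ¬ A v u ∧ ∃ w, A v w ∧ A w u

/-- `{u, v}` is a missing edge of the digraph. -/
def IsMissing (A : V → V → Prop) (u v : V) : Prop :=
  u ≠ v ∧ ¬ A u v ∧ ¬ A v u

/-- The losing relation for a fixed labeling of the two pairs: `a→x`, `b→y`,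
`y ∉ N⁺(a) ∪ N⁺⁺(a)` and `x ∉ N⁺(b) ∪ N⁺⁺(b)`. -/
def LosesOrd (A : V → V → Prop) (a b x y : V) : Prop :=
  A a x ∧ A b y ∧ ¬ A a y ∧ ¬ SecondOut A a y ∧ ¬ A b x ∧ ¬ SecondOut A b x

/-- The missing edge `{a,b}` loses to the missing edge `{x,y}` (for some labeling). -/
def Loses (A : V → V → Prop) (a b x y : V) : Prop :=
  LosesOrd A a b x y ∨ LosesOrd A a b y x

/-- Degree of a vertex in the missing graph. -/
noncomputable def mdeg (A : V → V → Prop) (v : V) : ℕ :=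
  ({w | IsMissing A v w} : Set V).ncard

/-- The missing graph, as a simple graph. -/
def missingGraph (A : V → V → Prop) : SimpleGraph V where
  Adj u v := IsMissing A u v
  symm := by
    constructor
    rintro u v ⟨h1, h2, h3⟩
    exact ⟨h1.symm, h3, h2⟩
  loopless := by
    constructor
    rintro v ⟨h1, -, -⟩
    exact h1 rfl

/-- The missing graph is a vertex-disjoint union of paths
(equivalently: acyclic with maximum degree at most 2). -/
def MissingDisjointPaths (A : V → V → Prop) : Prop :=
  (missingGraph A).IsAcyclic ∧ ∀ v, mdeg A v ≤ 2

/-- The missing graph is a vertex-disjoint union of paths on exactly 3 vertices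
(equivalently: every missing edge has one endpoint of missing-degree 1 and one of
missing-degree 2). -/
def MissingPaths2 (A : V → V → Prop) : Prop :=
  ∀ u v, IsMissing A u v →
    (mdeg A u = 1 ∧ mdeg A v = 2) ∨ (mdeg A u = 2 ∧ mdeg A v = 1)

/-- The missing graph is a vertex-disjoint union of paths on 2 or 3 vertices. -/
def MissingPathsLe2 (A : V → V → Prop) : Prop :=
  ∀ u v, IsMissing A u v →
    (mdeg A u = 1 ∧ mdeg A v = 1) ∨ (mdeg A u = 1 ∧ mdeg A v = 2) ∨
    (mdeg A u = 2 ∧ mdeg A v = 1)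

/-- Out-degree of the missing edge `{u,v}` in the dependency digraph `Δ(D)`:
the number of missing edges it loses to. -/
noncomputable def outDegDelta (A : V → V → Prop) (u v : V) : ℕ :=
  ({f : Sym2 V | ∃ x y, f = s(x, y) ∧ IsMissing A x y ∧ Loses A u v x y}).ncard

/-- In-degree of the missing edge `{u,v}` in the dependency digraph `Δ(D)`:
the number of missing edges losing to it. -/
noncomputable def inDegDelta (A : V → V → Prop) (u v : V) : ℕ :=
  ({f : Sym2 V | ∃ x y, f = s(x, y) ∧ IsMissing A x y ∧ Loses A x y u v}).ncard

/-- `C = a₁b₁c₁, …, a_k b_k c_k` is a double cycle in `Δ(D)`: pairwise vertex-disjoint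
missing paths of length 2 (`k ≥ 2`), where each of `{aᵢ,bᵢ}, {bᵢ,cᵢ}` loses to each of
`{aᵢ₊₁,bᵢ₊₁}, {bᵢ₊₁,cᵢ₊₁}` (indices modulo `k`). -/
def IsDoubleCycle (A : V → V → Prop) (k : ℕ) (a b c : ZMod k → V) : Prop :=
  2 ≤ k ∧
  (∀ i, IsMissing A (a i) (b i) ∧ IsMissing A (b i) (c i) ∧ a i ≠ c i) ∧
  (∀ i j, i ≠ j → Disjoint ({a i, b i, c i} : Set V) {a j, b j, c j}) ∧
  (∀ i, Loses A (a i) (b i) (a (i + 1)) (b (i + 1)) ∧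
        Loses A (a i) (b i) (b (i + 1)) (c (i + 1)) ∧
        Loses A (b i) (c i) (a (i + 1)) (b (i + 1)) ∧
        Loses A (b i) (c i) (b (i + 1)) (c (i + 1)))

/-- `K(C)` for a double cycle `C`. -/
def Kset {k : ℕ} (a b c : ZMod k → V) : Set V :=
  {v | ∃ i, v = a i ∨ v = b i ∨ v = c i}

/-- Out-neighborhood in the subdigraph induced on `K`. -/
def outIn (A : V → V → Prop) (K : Set V) (v : V) : Set V := {u | u ∈ K ∧ A v u}

/-- In-neighborhood in the subdigraph induced on `K`. -/
def inIn (A : V → V → Prop) (K : Set V) (v : V) : Set V := {u | u ∈ K ∧ A u v}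

/-- Second out-neighborhood in the subdigraph induced on `K`. -/
def secondOutIn (A : V → V → Prop) (K : Set V) (v : V) : Set V :=
  {u | u ∈ K ∧ u ≠ v ∧ ¬ A v u ∧ ∃ w ∈ K, A v w ∧ A w u}

/-- Second in-neighborhood in the subdigraph induced on `K`. -/
def secondInIn (A : V → V → Prop) (K : Set V) (v : V) : Set V :=
  {u | u ∈ K ∧ u ≠ v ∧ ¬ A u v ∧ ∃ w ∈ K, A u w ∧ A w v}

/-- Lemma 4.20: a directed cycle `C` of `Δ(D)` with `K(C) = J(x)` yields an interval. -/
theorem stmt17 {V : Type*} [Fintype V] (A : V → V → Prop) (hA : Oriented A)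
    (k : ℕ) (hk : 2 ≤ k) (a b : ZMod k → V)
    (hm : ∀ i, IsMissing A (a i) (b i))
    (hdisj : ∀ i j, i ≠ j → Disjoint ({a i, b i} : Set V) ({a j, b j} : Set V))
    (hcyc : ∀ i, Loses A (a i) (b i) (a (i + 1)) (b (i + 1)))
    (K : Set V) (hK : K = {w | ∃ i, w = a i ∨ w = b i})
    (hJ : ∀ u v, IsMissing A u v → u ∈ K →
      ∃ i, ({u, v} : Set V) = ({a i, b i} : Set V)) :
    ∀ u ∈ K, ∀ v ∈ K,
      ({w | A u w} : Set V) \ K = ({w | A v w} : Set V) \ K ∧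
      ({w | A w u} : Set V) \ K = ({w | A w v} : Set V) \ K := by
  classical
  haveI : NeZero k := ⟨by omega⟩
  -- swapping the two labels of the losing pair
  have lswap : ∀ p q r s : V, Loses A p q r s → Loses A q p r s := by
    rintro p q r s (⟨h1, h2, h3, h4, h5, h6⟩ | ⟨h1, h2, h3, h4, h5, h6⟩)
    · exact Or.inr ⟨h2, h1, h5, h6, h3, h4⟩
    · exact Or.inl ⟨h2, h1, h5, h6, h3, h4⟩
  -- membership of the a i, b i in K
  have hKa : ∀ i : ZMod k, a i ∈ K ∧ b i ∈ K := by
    intro i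
    rw [hK]
    exact ⟨⟨i, Or.inl rfl⟩, ⟨i, Or.inr rfl⟩⟩
  -- separation of distinct pairs
  have pairsep : ∀ (u v : V) (i j : ZMod k), i ≠ j → (u = a i ∨ u = b i) →
      (v = a j ∨ v = b j) → u ≠ v ∧ (¬ A u v → A v u) := by
    intro u v i j hij hu hv
    have hdis := hdisj i j hij
    have hui : u ∈ ({a i, b i} : Set V) := by rcases hu with h | h <;> simp [h]
    have hvj : v ∈ ({a j, b j} : Set V) := by rcases hv with h | h <;> simp [h]
    have huv : u ≠ v := by
      intro h
      exact Set.disjoint_left.mp hdis hui (h ▸ hvj)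
    refine ⟨huv, ?_⟩
    intro h1
    by_contra h2
    have huK : u ∈ K := by rcases hu with h | h <;> [exact h ▸ (hKa i).1; exact h ▸ (hKa i).2]
    obtain ⟨l, hl⟩ := hJ u v ⟨huv, h1, h2⟩ huK
    have hu' : u ∈ ({a l, b l} : Set V) := hl ▸ Set.mem_insert _ _
    have hv' : v ∈ ({a l, b l} : Set V) := hl ▸ Set.mem_insert_iff.mpr (Or.inr rfl)
    have hli : l = i := by
      by_contra h
      exact Set.disjoint_left.mp (hdisj l i h) hu' hui
    have hlj : l = j := by
      by_contra h
      exact Set.disjoint_left.mp (hdisj l j h) hv' hvj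
    exact hij (hli ▸ hlj)
  -- vertices outside K are completely joined to K
  have hwK : ∀ w, w ∉ K → ∀ u, u ∈ K → A u w ∨ A w u := by
    intro w hw u hu
    by_contra h
    push_neg at h
    have hne : u ≠ w := fun h' => hw (h' ▸ hu)
    obtain ⟨l, hl⟩ := hJ u w ⟨hne, h.1, h.2⟩ hu
    apply hw
    have hw' : w ∈ ({a l, b l} : Set V) := hl ▸ Set.mem_insert_iff.mpr (Or.inr rfl)
    rcases hw' with h' | h' <;> [exact h' ▸ (hKa l).1; exact (Set.mem_singleton_iff.mp h') ▸ (hKa l).2]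
  -- distinctness of indices
  have hcast_ne : ∀ (n m : ℕ), 1 ≤ m → m ≤ k - 1 → (↑n : ZMod k) ≠ ↑(n + m) := by
    intro n m h1 h2 h
    have hm : ((m : ℕ) : ZMod k) = 0 := by
      have : ((n + m : ℕ) : ZMod k) = (n : ZMod k) + (m : ZMod k) := by push_cast; ring
      rw [this] at h
      exact left_eq_add.mp h
    rw [ZMod.natCast_eq_zero_iff] at hm
    have := Nat.le_of_dvd (by omega) hm
    omega
  -- the straightened relabeling, built by recursion with choice
  let g : ℕ → V × V := fun n => Nat.rec (a 0, b 0)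
    (fun n pq => if LosesOrd A pq.1 pq.2 (b (((n + 1 : ℕ) : ZMod k))) (a (((n + 1 : ℕ) : ZMod k)))
      then (a (((n + 1 : ℕ) : ZMod k)), b (((n + 1 : ℕ) : ZMod k)))
      else (b (((n + 1 : ℕ) : ZMod k)), a (((n + 1 : ℕ) : ZMod k)))) n
  have hgs : ∀ n : ℕ, g (n + 1) =
      if LosesOrd A (g n).1 (g n).2 (b (((n + 1 : ℕ) : ZMod k))) (a (((n + 1 : ℕ) : ZMod k)))
      then (a (((n + 1 : ℕ) : ZMod k)), b (((n + 1 : ℕ) : ZMod k)))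
      else (b (((n + 1 : ℕ) : ZMod k)), a (((n + 1 : ℕ) : ZMod k))) := fun n => rfl
  -- the invariant: g n is a relabeling of the n-th pair
  have hinv : ∀ n : ℕ, ((g n).1 = a ↑n ∧ (g n).2 = b ↑n) ∨ ((g n).1 = b ↑n ∧ (g n).2 = a ↑n) := by
    intro n
    induction n with
    | zero => left; exact ⟨by simp [g], by simp [g]⟩
    | succ n ih =>
      rw [hgs n]
      split <;> simp
  have hLO : ∀ n : ℕ, LosesOrd A (g n).1 (g n).2 (g (n + 1)).2 (g (n + 1)).1 := by
    intro n
    have hca : a ((n : ZMod k) + 1) = a (((n + 1 : ℕ) : ZMod k)) := by congr 1; push_cast; ring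
    have hcb : b ((n : ZMod k) + 1) = b (((n + 1 : ℕ) : ZMod k)) := by congr 1; push_cast; ring
    have hc : Loses A (g n).1 (g n).2 (a (((n + 1 : ℕ) : ZMod k))) (b (((n + 1 : ℕ) : ZMod k))) := by
      have h0 := hcyc (n : ZMod k)
      rw [hca, hcb] at h0
      rcases hinv n with ⟨h1, h2⟩ | ⟨h1, h2⟩
      · rw [h1, h2]; exact h0
      · rw [h1, h2]; exact lswap _ _ _ _ h0
    rw [hgs n]
    split
    · next h => simpa using h
    · next h =>
      rcases hc with h' | h'
      · simpa using h'
      · exact absurd h' h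
  have hgmem : ∀ n : ℕ, ((g n).1 = a ↑n ∨ (g n).1 = b ↑n) ∧ ((g n).2 = a ↑n ∨ (g n).2 = b ↑n) := by
    intro n
    rcases hinv n with ⟨h1, h2⟩ | ⟨h1, h2⟩
    · exact ⟨Or.inl h1, Or.inr h2⟩
    · exact ⟨Or.inr h1, Or.inl h2⟩
  have hgK : ∀ n : ℕ, (g n).1 ∈ K ∧ (g n).2 ∈ K := by
    intro n
    rcases hgmem n with ⟨h1, h2⟩
    constructor
    · rcases h1 with h | h <;> [exact h ▸ (hKa _).1; exact h ▸ (hKa _).2]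
    · rcases h2 with h | h <;> [exact h ▸ (hKa _).1; exact h ▸ (hKa _).2]
  -- the big backward-arc induction
  have hchain : ∀ m n : ℕ, 1 ≤ m → m ≤ k - 1 →
      A ((g (n + m)).1) ((g n).1) ∧ A ((g (n + m)).2) ((g n).2) := by
    intro m
    induction m with
    | zero => intro n h1 h2; omega
    | succ m ih =>
      intro n h1 h2
      rcases Nat.eq_zero_or_pos m with hm | hm
      · subst hm
        obtain ⟨-, -, hx, -, hy, -⟩ := hLO n
        constructor
        · exact (pairsep _ _ (↑n) (↑(n + 1)) (hcast_ne n 1 le_rfl (by omega))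
            (hgmem n).1 (hgmem (n + 1)).1).2 hx
        · exact (pairsep _ _ (↑n) (↑(n + 1)) (hcast_ne n 1 le_rfl (by omega))
            (hgmem n).2 (hgmem (n + 1)).2).2 hy
      · have ihx := (ih (n + 1) hm (by omega)).1
        have ihy := (ih (n + 1) hm (by omega)).2
        rw [show n + 1 + m = n + (m + 1) from by omega] at ihx ihy
        obtain ⟨-, -, hx1, hSOx, hy1, hSOy⟩ := hLO n
        have hnx : ¬ A ((g n).1) ((g (n + (m + 1))).1) := by
          intro hAx
          exact hSOx ⟨(pairsep _ _ (↑(n + 1)) (↑n)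
              (Ne.symm (hcast_ne n 1 le_rfl (by omega))) (hgmem (n + 1)).1 (hgmem n).1).1,
            hx1, (g (n + (m + 1))).1, hAx, ihx⟩
        have hny : ¬ A ((g n).2) ((g (n + (m + 1))).2) := by
          intro hAy
          exact hSOy ⟨(pairsep _ _ (↑(n + 1)) (↑n)
              (Ne.symm (hcast_ne n 1 le_rfl (by omega))) (hgmem (n + 1)).2 (hgmem n).2).1,
            hy1, (g (n + (m + 1))).2, hAy, ihy⟩
        constructor
        · exact (pairsep _ _ (↑n) (↑(n + (m + 1))) (hcast_ne n (m + 1) (by omega) h2)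
            (hgmem n).1 (hgmem (n + (m + 1))).1).2 hnx
        · exact (pairsep _ _ (↑n) (↑(n + (m + 1))) (hcast_ne n (m + 1) (by omega) h2)
            (hgmem n).2 (hgmem (n + (m + 1))).2).2 hny
  -- after k steps the labels must be swapped (else a digon)
  have hswap : ∀ n : ℕ, (g (n + k)).1 = (g n).2 ∧ (g (n + k)).2 = (g n).1 := by
    intro n
    have hek : a (((n + k : ℕ) : ZMod k)) = a ↑n ∧ b (((n + k : ℕ) : ZMod k)) = b ↑n := by
      constructor <;> · congr 1; push_cast [ZMod.natCast_self]; ring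
    have hxne : (g (n + k)).1 ≠ (g n).1 := by
      intro h
      have h1 := (hchain 1 n le_rfl (by omega)).1
      have h2 := (hchain (k - 1) (n + 1) (by omega) le_rfl).1
      rw [show n + 1 + (k - 1) = n + k from by omega, h] at h2
      exact hA _ _ h1 h2
    have hyne : (g (n + k)).2 ≠ (g n).2 := by
      intro h
      have h1 := (hchain 1 n le_rfl (by omega)).2
      have h2 := (hchain (k - 1) (n + 1) (by omega) le_rfl).2
      rw [show n + 1 + (k - 1) = n + k from by omega, h] at h2
      exact hA _ _ h1 h2
    rcases hinv n with ⟨h1, h2⟩ | ⟨h1, h2⟩ <;>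
      rcases hinv (n + k) with ⟨h1', h2'⟩ | ⟨h1', h2'⟩ <;>
      simp only [hek.1, hek.2] at h1' h2'
    · exact absurd (h1'.trans h1.symm) hxne
    · exact ⟨h1'.trans h2.symm, h2'.trans h1.symm⟩
    · exact ⟨h1'.trans h2.symm, h2'.trans h1.symm⟩
    · exact absurd (h1'.trans h1.symm) hxne
  have hper : ∀ n : ℕ, (g (n + 2 * k)).1 = (g n).1 := by
    intro n
    rw [show n + 2 * k = n + k + k from by omega]
    rw [(hswap (n + k)).1, (hswap n).2]
  have hper2 : ∀ (j n : ℕ), (g (n + 2 * k * j)).1 = (g n).1 := by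
    intro j
    induction j with
    | zero => intro n; simp
    | succ j ih =>
      intro n
      rw [show n + 2 * k * (j + 1) = n + 2 * k * j + 2 * k from by ring, hper, ih]
  -- the out-sets grow along the sequence
  have hstep : ∀ (n : ℕ) (w : V), w ∉ K → A ((g n).1) w → A ((g (n + 1)).1) w := by
    intro n w hw hAw
    obtain ⟨-, -, hx1, hSOx, -, -⟩ := hLO n
    have hnAw : ¬ A w ((g (n + 1)).1) := by
      intro h
      exact hSOx ⟨(pairsep _ _ (↑(n + 1)) (↑n)
          (Ne.symm (hcast_ne n 1 le_rfl (by omega))) (hgmem (n + 1)).1 (hgmem n).1).1,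
        hx1, w, hAw, h⟩
    rcases hwK w hw _ (hgK (n + 1)).1 with h | h
    · exact h
    · exact absurd h hnAw
  have hiter : ∀ (m n : ℕ) (w : V), w ∉ K → A ((g n).1) w → A ((g (n + m)).1) w := by
    intro m
    induction m with
    | zero => intro n w _ h; simpa using h
    | succ m ih =>
      intro n w hw h
      rw [show n + (m + 1) = n + m + 1 from by omega]
      exact hstep _ _ hw (ih n w hw h)
  -- all out-sets (minus K) coincide
  have main : ∀ (p q : ℕ) (w : V), w ∉ K → A ((g p).1) w → A ((g q).1) w := by
    intro p q w hw hAw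
    have hle : p ≤ q + 2 * k * p := by
      have h1 : p ≤ 2 * k * p := Nat.le_mul_of_pos_left p (by omega)
      exact h1.trans (Nat.le_add_left _ q)
    have h2 := hiter (q + 2 * k * p - p) p w hw hAw
    rw [Nat.add_sub_cancel' hle] at h2
    rwa [hper2 p q] at h2
  -- every vertex of K is some (g p).1
  have hrep : ∀ u ∈ K, ∃ p : ℕ, u = (g p).1 := by
    intro u hu
    rw [hK] at hu
    obtain ⟨i, hi⟩ := hu
    have hcv : ((i.val : ℕ) : ZMod k) = i := ZMod.natCast_rightInverse i
    rcases hinv i.val with ⟨h1, h2⟩ | ⟨h1, h2⟩ <;> rw [hcv] at h1 h2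
    · rcases hi with h | h
      · exact ⟨i.val, h.trans h1.symm⟩
      · refine ⟨i.val + k, ?_⟩
        rw [(hswap i.val).1, h2]; exact h
    · rcases hi with h | h
      · refine ⟨i.val + k, ?_⟩
        rw [(hswap i.val).1, h2]; exact h
      · exact ⟨i.val, h.trans h1.symm⟩
  -- conclude
  intro u hu v hv
  obtain ⟨p, hp⟩ := hrep u hu
  obtain ⟨q, hq⟩ := hrep v hv
  subst hp
  subst hq
  constructor
  · ext w
    simp only [Set.mem_diff, Set.mem_setOf_eq]
    exact ⟨fun ⟨h1, h2⟩ => ⟨main p q w h2 h1, h2⟩, fun ⟨h1, h2⟩ => ⟨main q p w h2 h1, h2⟩⟩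
  · ext w
    simp only [Set.mem_diff, Set.mem_setOf_eq]
    constructor
    · rintro ⟨h1, h2⟩
      refine ⟨?_, h2⟩
      rcases hwK w h2 _ (hgK q).1 with h | h
      · exact absurd (main q p w h2 h) (hA _ _ h1)
      · exact h
    · rintro ⟨h1, h2⟩
      refine ⟨?_, h2⟩
      rcases hwK w h2 _ (hgK p).1 with h | h
      · exact absurd (main p q w h2 h) (hA _ _ h1)
      · exact h

end SSNC
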